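/- Suppose $f, f', f'' : \mathbb{R} \to \mathbb{R}$ exist, are bounded and uniformly continuous on $\mathbb{R}$, and $f$ is integrable. Then $u(x,t) := E_t(f)(x) = \int_{-\infty}^{+\infty} f(x-v) \cdot \frac{t\, e^{-t|v|}}{2}\, dv$ solves the final value problem $\frac{\partial u}{\partial t}(x,t) = \frac{1}{t^2} \frac{\partial^3 u}{\partial x^2 \partial t}(x,t) - \frac{2}{t^3} \frac{\partial^2 u}{\partial x^2}(x,t)$ for all $t > 0$, $x \in \mathbb{R}$, together with $\lim_{s \to \infty} u(x,s) = f(x)$ for every $x \in \mathbb{R}$. -/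

import Mathlib

open MeasureTheory Filter Set

/-- The exponential convolution operator. -/
noncomputable def expConv (f : ℝ → ℝ) (t x : ℝ) : ℝ :=
  ∫ v : ℝ, f (x - v) * (t * Real.exp (-t * |v|) / 2)

namespace ECAux

/-- Integrability of `x ↦ f |x|` from integrability on the half line, for continuous `f`. -/
lemma integrable_comp_abs {f : ℝ → ℝ} (hc : Continuous f)
    (hf : IntegrableOn f (Ioi 0)) : Integrable (fun x : ℝ => f |x|) := by
  have hIoi : IntegrableOn (fun x : ℝ => f |x|) (Ioi 0) :=
    hf.congr_fun (fun x hx => by rw [abs_of_pos hx]) measurableSet_Ioi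
  have hIic : IntegrableOn (fun x : ℝ => f |x|) (Iic 0) := by
    rw [← Measure.map_neg_eq_self (volume : Measure ℝ)]
    have m : MeasurableEmbedding fun x : ℝ => -x := (Homeomorph.neg ℝ).measurableEmbedding
    rw [m.integrableOn_map_iff]
    simp_rw [Function.comp_def, abs_neg, neg_preimage, neg_Iic, neg_zero]
    exact Iff.mpr integrableOn_Ici_iff_integrableOn_Ioi hIoi
  have := hIic.union hIoi
  rwa [Iic_union_Ioi, integrableOn_univ] at this

lemma integrable_exp_abs {a : ℝ} (ha : 0 < a) :
    Integrable (fun v : ℝ => Real.exp (-a * |v|)) :=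
  integrable_comp_abs (by continuity) (exp_neg_integrableOn_Ioi 0 ha)

lemma abs_le_exp_bound {a : ℝ} (ha : 0 < a) (v : ℝ) :
    |v| * Real.exp (-a * |v|) ≤ (2 / a) * Real.exp (-(a / 2) * |v|) := by
  have h1 : a / 2 * |v| ≤ Real.exp (a / 2 * |v|) := by
    have := Real.add_one_le_exp (a / 2 * |v|); linarith
  have he : Real.exp (-a * |v|) * Real.exp (a / 2 * |v|) = Real.exp (-(a / 2) * |v|) := by
    rw [← Real.exp_add]; ring_nf
  have hv : |v| ≤ (2 / a) * Real.exp (a / 2 * |v|) := by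
    rw [div_mul_eq_mul_div, le_div_iff₀ ha]
    linarith
  calc |v| * Real.exp (-a * |v|)
      ≤ ((2 / a) * Real.exp (a / 2 * |v|)) * Real.exp (-a * |v|) :=
        mul_le_mul_of_nonneg_right hv (Real.exp_pos _).le
    _ = (2 / a) * Real.exp (-(a / 2) * |v|) := by rw [mul_assoc, mul_comm (Real.exp _), he]

lemma integrable_abs_exp_abs {a : ℝ} (ha : 0 < a) :
    Integrable (fun v : ℝ => |v| * Real.exp (-a * |v|)) := by
  refine ((integrable_exp_abs (half_pos ha)).const_mul (2 / a)).mono' ?_ ?_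
  · exact (continuous_abs.mul (by continuity)).aestronglyMeasurable
  · refine ae_of_all _ fun v => ?_
    rw [Real.norm_eq_abs, abs_of_nonneg (by positivity)]
    simpa [neg_div] using abs_le_exp_bound ha v

lemma integrable_kernel {t : ℝ} (ht : 0 < t) :
    Integrable (fun v : ℝ => t * Real.exp (-t * |v|) / 2) :=
  ((integrable_exp_abs ht).const_mul t).div_const 2

lemma integrable_mul_kernel {g : ℝ → ℝ} (hg : Continuous g) {M : ℝ} (hM : ∀ y, |g y| ≤ M)
    {t : ℝ} (ht : 0 < t) (x : ℝ) :
    Integrable (fun v : ℝ => g (x - v) * (t * Real.exp (-t * |v|) / 2)) :=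
  (integrable_kernel ht).bdd_mul
    ((hg.comp (continuous_const.sub continuous_id)).aestronglyMeasurable)
    (c := M) (ae_of_all _ fun v => by rw [Real.norm_eq_abs]; exact hM _)

/-- Differentiating the exponential convolution in the space variable. -/
lemma hasDerivAt_expConv_x {g g' : ℝ → ℝ} (hd : ∀ y, HasDerivAt g (g' y) y)
    (hg'c : Continuous g') {Mg Mg' : ℝ} (hMg : ∀ y, |g y| ≤ Mg) (hMg' : ∀ y, |g' y| ≤ Mg')
    {t : ℝ} (ht : 0 < t) (x : ℝ) :
    HasDerivAt (fun y => expConv g t y) (expConv g' t x) x := by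
  have hgd : Differentiable ℝ g := fun y => (hd y).differentiableAt
  have hgc : Continuous g := hgd.continuous
  have key := hasDerivAt_integral_of_dominated_loc_of_deriv_le (μ := volume) (x₀ := x)
    (Metric.ball_mem_nhds x one_pos)
    (F := fun y v => g (y - v) * (t * Real.exp (-t * |v|) / 2))
    (F' := fun y v => g' (y - v) * (t * Real.exp (-t * |v|) / 2))
    (bound := fun v => Mg' * (t * Real.exp (-t * |v|) / 2))
    (Eventually.of_forall fun y =>
      ((hgc.comp (continuous_const.sub continuous_id)).mul (by continuity)).aestronglyMeasurable)
    (integrable_mul_kernel hgc hMg ht x)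
    ((hg'c.comp (continuous_const.sub continuous_id)).mul (by continuity)).aestronglyMeasurable
    (ae_of_all _ fun v y _ => by
      have hK : 0 ≤ t * Real.exp (-t * |v|) / 2 := by positivity
      rw [Real.norm_eq_abs, abs_mul, abs_of_nonneg hK]
      exact mul_le_mul_of_nonneg_right (hMg' _) hK)
    ((integrable_kernel ht).const_mul Mg')
    (ae_of_all _ fun v y _ => by
      have h0 : HasDerivAt (fun y => g (y - v)) (g' (y - v)) y := by
        simpa [Function.comp_def] using (hd (y - v)).comp y ((hasDerivAt_id y).sub_const v)
      exact h0.mul_const _)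
  exact key.2

/-- The key identity: `E_t(f'') = t^2 (E_t f - f)`. -/
lemma expConv_second {f f₁ f₂ : ℝ → ℝ}
    (hd1 : ∀ y, HasDerivAt f (f₁ y) y) (hd2 : ∀ y, HasDerivAt f₁ (f₂ y) y)
    (hc2 : Continuous f₂)
    {M0 M1 M2 : ℝ} (hM0 : ∀ y, |f y| ≤ M0) (hM1 : ∀ y, |f₁ y| ≤ M1) (hM2 : ∀ y, |f₂ y| ≤ M2)
    {t : ℝ} (ht : 0 < t) (x : ℝ) :
    expConv f₂ t x = t ^ 2 * (expConv f t x - f x) := by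
  have hfd : Differentiable ℝ f := fun y => (hd1 y).differentiableAt
  have hf1d : Differentiable ℝ f₁ := fun y => (hd2 y).differentiableAt
  have hfc : Continuous f := hfd.continuous
  have hf1c : Continuous f₁ := hf1d.continuous
  have hM0' : (0:ℝ) ≤ M0 := le_trans (abs_nonneg _) (hM0 0)
  have hM1' : (0:ℝ) ≤ M1 := le_trans (abs_nonneg _) (hM1 0)
  have hM2' : (0:ℝ) ≤ M2 := le_trans (abs_nonneg _) (hM2 0)
  -- derivatives of v ↦ f (x - v)
  have hdfv : ∀ v : ℝ, HasDerivAt (fun v => f (x - v)) (-f₁ (x - v)) v := fun v => by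
    simpa [Function.comp_def] using (hd1 (x - v)).comp v ((hasDerivAt_id v).const_sub x)
  have hdf1v : ∀ v : ℝ, HasDerivAt (fun v => f₁ (x - v)) (-f₂ (x - v)) v := fun v => by
    simpa [Function.comp_def] using (hd2 (x - v)).comp v ((hasDerivAt_id v).const_sub x)
  -- the integrand on each half line
  set P : ℝ → ℝ := fun v => (f₂ (x - v) - t ^ 2 * f (x - v)) * Real.exp (-t * v) with hP
  set Q : ℝ → ℝ := fun v => (f₂ (x - v) - t ^ 2 * f (x - v)) * Real.exp (t * v) with hQ
  -- Ioi part
  have hPint : IntegrableOn P (Ioi 0) := by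
    refine ((exp_neg_integrableOn_Ioi 0 ht).const_mul (M2 + t ^ 2 * M0)).mono' ?_ ?_
    · exact (((hc2.comp (continuous_const.sub continuous_id)).sub
        (continuous_const.mul (hfc.comp (continuous_const.sub continuous_id)))).mul
        (by continuity)).aestronglyMeasurable.restrict
    · refine ae_of_all _ fun v => ?_
      rw [Real.norm_eq_abs, hP]
      simp only
      rw [abs_mul, abs_of_nonneg (Real.exp_pos _).le]
      refine mul_le_mul_of_nonneg_right ?_ (Real.exp_pos _).le
      calc |f₂ (x - v) - t ^ 2 * f (x - v)| ≤ |f₂ (x - v)| + t ^ 2 * |f (x - v)| := by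
            have := abs_sub (f₂ (x - v)) (t ^ 2 * f (x - v))
            rw [abs_mul, abs_of_pos (by positivity : (0:ℝ) < t ^ 2)] at this
            exact this
        _ ≤ M2 + t ^ 2 * M0 := add_le_add (hM2 _)
            (mul_le_mul_of_nonneg_left (hM0 _) (by positivity))
  have hIoi : ∫ v in Ioi (0:ℝ), P v = f₁ x - t * f x := by
    set FF : ℝ → ℝ := fun v => (-f₁ (x - v) + t * f (x - v)) * Real.exp (-t * v) with hFF
    have hFFd : ∀ v : ℝ, HasDerivAt FF (P v) v := by
      intro v
      have h1 : HasDerivAt (fun v : ℝ => -t * v) (-t) v := by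
        simpa using (hasDerivAt_id v).const_mul (-t)
      have he : HasDerivAt (fun v : ℝ => Real.exp (-t * v)) (Real.exp (-t * v) * (-t)) v :=
        (Real.hasDerivAt_exp _).comp v h1
      have hu : HasDerivAt (fun v => -f₁ (x - v) + t * f (x - v))
          (-(-f₂ (x - v)) + t * (-f₁ (x - v))) v := ((hdf1v v).neg).add ((hdfv v).const_mul t)
      have := hu.fun_mul he
      refine this.congr_deriv ?_
      simp only [hP]; ring
    have hFFtop : Tendsto FF atTop (nhds 0) := by
      have hexp : Tendsto (fun v : ℝ => Real.exp (-t * v)) atTop (nhds 0) := by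
        have h1 : Tendsto (fun v : ℝ => t * v) atTop atTop :=
          Tendsto.const_mul_atTop ht tendsto_id
        have h2 := Real.tendsto_exp_neg_atTop_nhds_zero.comp h1
        simpa [Function.comp_def, neg_mul] using h2
      have hbig : Tendsto (fun v : ℝ => (M1 + t * M0) * Real.exp (-t * v)) atTop (nhds 0) := by
        simpa using hexp.const_mul (M1 + t * M0)
      refine squeeze_zero_norm (fun v => ?_) hbig
      rw [Real.norm_eq_abs, hFF]
      simp only
      rw [abs_mul, abs_of_nonneg (Real.exp_pos _).le]
      refine mul_le_mul_of_nonneg_right ?_ (Real.exp_pos _).le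
      calc |(-f₁ (x - v) + t * f (x - v))| ≤ |f₁ (x - v)| + t * |f (x - v)| := by
            have := abs_add_le (-f₁ (x - v)) (t * f (x - v))
            rw [abs_neg, abs_mul, abs_of_pos ht] at this
            exact this
        _ ≤ M1 + t * M0 := add_le_add (hM1 _) (mul_le_mul_of_nonneg_left (hM0 _) ht.le)
    have := integral_Ioi_of_hasDerivAt_of_tendsto' (fun v _ => hFFd v) hPint hFFtop
    rw [this, hFF]
    simp [Real.exp_zero]
    ring
  -- Iic part
  have hQIic : IntegrableOn Q (Iic 0) := by
    have hexpI : IntegrableOn (fun v : ℝ => Real.exp (t * v)) (Iic 0) :=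
      ((integrable_exp_abs ht).integrableOn).congr_fun
        (fun v hv => by dsimp only; rw [abs_of_nonpos hv, neg_mul_neg]) measurableSet_Iic
    refine (hexpI.const_mul (M2 + t ^ 2 * M0)).mono' ?_ ?_
    · exact (((hc2.comp (continuous_const.sub continuous_id)).sub
        (continuous_const.mul (hfc.comp (continuous_const.sub continuous_id)))).mul
        (by continuity)).aestronglyMeasurable.restrict
    · refine ae_of_all _ fun v => ?_
      rw [Real.norm_eq_abs, hQ]
      simp only
      rw [abs_mul, abs_of_nonneg (Real.exp_pos _).le]
      refine mul_le_mul_of_nonneg_right ?_ (Real.exp_pos _).le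
      calc |f₂ (x - v) - t ^ 2 * f (x - v)| ≤ |f₂ (x - v)| + t ^ 2 * |f (x - v)| := by
            have := abs_sub (f₂ (x - v)) (t ^ 2 * f (x - v))
            rw [abs_mul, abs_of_pos (by positivity : (0:ℝ) < t ^ 2)] at this
            exact this
        _ ≤ M2 + t ^ 2 * M0 := add_le_add (hM2 _)
            (mul_le_mul_of_nonneg_left (hM0 _) (by positivity))
  have hIic : ∫ v in Iic (0:ℝ), Q v = -f₁ x - t * f x := by
    set GG : ℝ → ℝ := fun v => (-f₁ (x - v) - t * f (x - v)) * Real.exp (t * v) with hGG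
    have hGGd : ∀ v : ℝ, HasDerivAt GG (Q v) v := by
      intro v
      have h1 : HasDerivAt (fun v : ℝ => t * v) t v := by
        simpa using (hasDerivAt_id v).const_mul t
      have he : HasDerivAt (fun v : ℝ => Real.exp (t * v)) (Real.exp (t * v) * t) v :=
        (Real.hasDerivAt_exp _).comp v h1
      have hu : HasDerivAt (fun v => -f₁ (x - v) - t * f (x - v))
          (-(-f₂ (x - v)) - t * (-f₁ (x - v))) v := ((hdf1v v).neg).sub ((hdfv v).const_mul t)
      have := hu.fun_mul he
      refine this.congr_deriv ?_
      simp only [hQ]; ring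
    have hGGbot : Tendsto GG atBot (nhds 0) := by
      have hexp : Tendsto (fun v : ℝ => Real.exp (t * v)) atBot (nhds 0) := by
        have h1 : Tendsto (fun v : ℝ => t * v) atBot atBot :=
          (tendsto_const_mul_atBot_of_pos ht).2 tendsto_id
        exact Real.tendsto_exp_atBot.comp h1
      have hbig : Tendsto (fun v : ℝ => (M1 + t * M0) * Real.exp (t * v)) atBot (nhds 0) := by
        simpa using hexp.const_mul (M1 + t * M0)
      refine squeeze_zero_norm (fun v => ?_) hbig
      rw [Real.norm_eq_abs, hGG]
      simp only
      rw [abs_mul, abs_of_nonneg (Real.exp_pos _).le]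
      refine mul_le_mul_of_nonneg_right ?_ (Real.exp_pos _).le
      calc |(-f₁ (x - v) - t * f (x - v))| ≤ |f₁ (x - v)| + t * |f (x - v)| := by
            have := abs_sub (-f₁ (x - v)) (t * f (x - v))
            rw [abs_neg, abs_mul, abs_of_pos ht] at this
            exact this
        _ ≤ M1 + t * M0 := add_le_add (hM1 _) (mul_le_mul_of_nonneg_left (hM0 _) ht.le)
    have hGGcont : Continuous GG := by
      refine Continuous.mul ?_ (by continuity)
      exact ((hf1c.comp (continuous_const.sub continuous_id)).neg.sub
        (continuous_const.mul (hfc.comp (continuous_const.sub continuous_id))))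
    have := integral_Iic_of_hasDerivAt_of_tendsto hGGcont.continuousWithinAt
      (fun v _ => hGGd v) hQIic hGGbot
    rw [this, hGG]
    simp [Real.exp_zero]
  -- combine the two halves
  have hPQ : ∫ v : ℝ, (f₂ (x - v) - t ^ 2 * f (x - v)) * Real.exp (-t * |v|)
      = -2 * t * f x := by
    have hIicK : IntegrableOn
        (fun v : ℝ => (f₂ (x - v) - t ^ 2 * f (x - v)) * Real.exp (-t * |v|)) (Iic 0) :=
      hQIic.congr_fun (fun v hv => by
        simp only [hQ]; rw [abs_of_nonpos hv, neg_mul_neg]) measurableSet_Iic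
    have hIoiK : IntegrableOn
        (fun v : ℝ => (f₂ (x - v) - t ^ 2 * f (x - v)) * Real.exp (-t * |v|)) (Ioi 0) :=
      hPint.congr_fun (fun v hv => by
        simp only [hP]; rw [abs_of_pos hv]) measurableSet_Ioi
    rw [← intervalIntegral.integral_Iic_add_Ioi hIicK hIoiK]
    have e1 : ∫ v in Iic (0:ℝ), (f₂ (x - v) - t ^ 2 * f (x - v)) * Real.exp (-t * |v|)
        = ∫ v in Iic (0:ℝ), Q v := by
      refine setIntegral_congr_fun measurableSet_Iic fun v hv => ?_
      simp only [hQ]; rw [abs_of_nonpos hv, neg_mul_neg]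
    have e2 : ∫ v in Ioi (0:ℝ), (f₂ (x - v) - t ^ 2 * f (x - v)) * Real.exp (-t * |v|)
        = ∫ v in Ioi (0:ℝ), P v := by
      refine setIntegral_congr_fun measurableSet_Ioi fun v hv => ?_
      simp only [hP]; rw [abs_of_pos hv]
    rw [e1, e2, hIic, hIoi]
    ring
  -- final assembly
  have h1 : Integrable (fun v => f₂ (x - v) * (t * Real.exp (-t * |v|) / 2)) :=
    integrable_mul_kernel hc2 hM2 ht x
  have h2 : Integrable (fun v => f (x - v) * (t * Real.exp (-t * |v|) / 2)) :=
    integrable_mul_kernel hfc hM0 ht x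
  have key : ∫ v : ℝ, (f₂ (x - v) - t ^ 2 * f (x - v)) * (t * Real.exp (-t * |v|) / 2)
      = expConv f₂ t x - t ^ 2 * expConv f t x := by
    have hsub := integral_sub h1 (h2.const_mul (t ^ 2))
    rw [integral_const_mul] at hsub
    rw [expConv, expConv, ← hsub]
    exact integral_congr_ae (Eventually.of_forall fun v => by ring)
  have key2 : ∫ v : ℝ, (f₂ (x - v) - t ^ 2 * f (x - v)) * (t * Real.exp (-t * |v|) / 2)
      = -t ^ 2 * f x := by
    have hr : ∀ v : ℝ, (f₂ (x - v) - t ^ 2 * f (x - v)) * (t * Real.exp (-t * |v|) / 2)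
        = (t / 2) * ((f₂ (x - v) - t ^ 2 * f (x - v)) * Real.exp (-t * |v|)) := fun v => by ring
    simp_rw [hr]
    rw [integral_const_mul, hPQ]
    ring
  linear_combination key2 - key

/-- Differentiating the exponential convolution in the time variable. -/
lemma hasDerivAt_expConv_t {f : ℝ → ℝ} (hc : Continuous f) {M0 : ℝ} (hM0 : ∀ y, |f y| ≤ M0)
    {t : ℝ} (ht : 0 < t) (x : ℝ) :
    HasDerivAt (fun s => expConv f s x)
      (∫ v : ℝ, f (x - v) * ((1 - t * |v|) * Real.exp (-t * |v|) / 2)) t := by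
  have hM0' : (0:ℝ) ≤ M0 := le_trans (abs_nonneg _) (hM0 0)
  have ht2 : (0:ℝ) < t / 2 := half_pos ht
  have key := hasDerivAt_integral_of_dominated_loc_of_deriv_le (μ := volume) (x₀ := t)
    (Metric.ball_mem_nhds t ht2)
    (F := fun s v => f (x - v) * (s * Real.exp (-s * |v|) / 2))
    (F' := fun s v => f (x - v) * ((1 - s * |v|) * Real.exp (-s * |v|) / 2))
    (bound := fun v => M0 * (Real.exp (-(t / 2) * |v|) + 2 * t * (|v| * Real.exp (-(t / 2) * |v|))))
    (Eventually.of_forall fun s =>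
      ((hc.comp (continuous_const.sub continuous_id)).mul (by continuity)).aestronglyMeasurable)
    (integrable_mul_kernel hc hM0 ht x)
    ((hc.comp (continuous_const.sub continuous_id)).mul (by continuity)).aestronglyMeasurable
    (ae_of_all _ fun v s hs => by
      rw [Metric.mem_ball, Real.dist_eq, abs_sub_lt_iff] at hs
      have hs1 : t / 2 < s := by linarith [hs.2]
      have hs2 : s < 2 * t := by linarith [hs.1]
      have hv0 := abs_nonneg v
      have hsv : s * |v| ≤ 2 * t * |v| := mul_le_mul_of_nonneg_right hs2.le hv0
      have hsv0 : (0:ℝ) ≤ s * |v| := mul_nonneg (by linarith) hv0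
      have htv0 : (0:ℝ) ≤ 2 * t * |v| := by positivity
      have hE : Real.exp (-s * |v|) ≤ Real.exp (-(t / 2) * |v|) := by
        apply Real.exp_le_exp.2
        nlinarith
      have h1 : abs (1 - s * |v|) ≤ 1 + 2 * t * |v| :=
        abs_le.2 ⟨by linarith, by linarith⟩
      rw [Real.norm_eq_abs, abs_mul, abs_div, abs_mul, abs_two,
        abs_of_nonneg (Real.exp_pos (-s * |v|)).le]
      have hmain : abs (1 - s * |v|) * Real.exp (-s * |v|) / 2
          ≤ (1 + 2 * t * |v|) * Real.exp (-(t / 2) * |v|) := by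
        have hm := mul_le_mul h1 hE (Real.exp_pos _).le (by positivity)
        have h0 : (0:ℝ) ≤ abs (1 - s * |v|) * Real.exp (-s * |v|) := by positivity
        linarith
      calc |f (x - v)| * (abs (1 - s * |v|) * Real.exp (-s * |v|) / 2)
          ≤ M0 * ((1 + 2 * t * |v|) * Real.exp (-(t / 2) * |v|)) :=
            mul_le_mul (hM0 _) hmain (by positivity) hM0'
        _ = M0 * (Real.exp (-(t / 2) * |v|) + 2 * t * (|v| * Real.exp (-(t / 2) * |v|))) := by
            ring)
    (((integrable_exp_abs ht2).add
        ((integrable_abs_exp_abs ht2).const_mul (2 * t))).const_mul M0)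
    (ae_of_all _ fun v s _ => by
      have h1 : HasDerivAt (fun s : ℝ => -s * |v|) (-|v|) s := by
        simpa using ((hasDerivAt_id s).neg.mul_const |v|)
      have he : HasDerivAt (fun s : ℝ => Real.exp (-s * |v|))
          (Real.exp (-s * |v|) * (-|v|)) s := (Real.hasDerivAt_exp _).comp s h1
      have hm : HasDerivAt (fun s : ℝ => s * Real.exp (-s * |v|))
          (1 * Real.exp (-s * |v|) + s * (Real.exp (-s * |v|) * (-|v|))) s :=
        (hasDerivAt_id s).fun_mul he
      have := (hm.div_const 2).const_mul (f (x - v))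
      refine this.congr_deriv ?_
      ring)
  exact key.2

lemma integral_exp_neg_mul_Ioi {t : ℝ} (ht : 0 < t) :
    ∫ v in Ioi (0:ℝ), Real.exp (-t * v) = 1 / t := by
  have hd : ∀ v ∈ Ici (0:ℝ), HasDerivAt (fun v : ℝ => -Real.exp (-t * v) / t)
      (Real.exp (-t * v)) v := by
    intro v _
    have h1 : HasDerivAt (fun v : ℝ => -t * v) (-t) v := by
      simpa using (hasDerivAt_id v).const_mul (-t)
    have he := (Real.hasDerivAt_exp _).comp v h1
    have := (he.neg).div_const t
    refine this.congr_deriv ?_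
    field_simp
  have htop : Tendsto (fun v : ℝ => -Real.exp (-t * v) / t) atTop (nhds 0) := by
    have h1 : Tendsto (fun v : ℝ => t * v) atTop atTop := Tendsto.const_mul_atTop ht tendsto_id
    have h2 := Real.tendsto_exp_neg_atTop_nhds_zero.comp h1
    have h3 : Tendsto (fun v : ℝ => Real.exp (-(t * v))) atTop (nhds 0) := by
      simpa [Function.comp_def] using h2
    have := (h3.neg).div_const t
    simpa [neg_mul] using this
  have := integral_Ioi_of_hasDerivAt_of_tendsto' hd (exp_neg_integrableOn_Ioi 0 ht) htop
  rw [this]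
  simp [Real.exp_zero]
  field_simp

lemma integral_abs_exp_neg_mul_Ioi {t : ℝ} (ht : 0 < t) :
    ∫ v in Ioi (0:ℝ), v * Real.exp (-t * v) = 1 / t ^ 2 := by
  have hd : ∀ v ∈ Ici (0:ℝ), HasDerivAt (fun v : ℝ => -((v / t + 1 / t ^ 2) * Real.exp (-t * v)))
      (v * Real.exp (-t * v)) v := by
    intro v _
    have h1 : HasDerivAt (fun v : ℝ => -t * v) (-t) v := by
      simpa using (hasDerivAt_id v).const_mul (-t)
    have he := (Real.hasDerivAt_exp _).comp v h1
    have hu : HasDerivAt (fun v : ℝ => v / t + 1 / t ^ 2) (1 / t) v :=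
      ((hasDerivAt_id v).div_const t).add_const (1 / t ^ 2)
    have := (hu.fun_mul he).neg
    refine this.congr_deriv ?_
    simp only [Function.comp_apply]; field_simp
    ring
  have hint : IntegrableOn (fun v : ℝ => v * Real.exp (-t * v)) (Ioi 0) := by
    have := integrable_abs_exp_abs ht
    refine (this.integrableOn).congr_fun (fun v hv => ?_) measurableSet_Ioi
    dsimp only; rw [abs_of_pos hv]
  have htop : Tendsto (fun v : ℝ => -((v / t + 1 / t ^ 2) * Real.exp (-t * v))) atTop (nhds 0) := by
    have h1 : Tendsto (fun v : ℝ => t * v) atTop atTop := Tendsto.const_mul_atTop ht tendsto_id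
    have hy : Tendsto (fun y : ℝ => y * Real.exp (-y)) atTop (nhds 0) := by
      simpa using Real.tendsto_pow_mul_exp_neg_atTop_nhds_zero 1
    have h2 : Tendsto (fun v : ℝ => (t * v) * Real.exp (-(t * v))) atTop (nhds 0) := hy.comp h1
    have h3 : Tendsto (fun v : ℝ => v * Real.exp (-t * v)) atTop (nhds 0) := by
      have hdiv := h2.div_const t
      rw [zero_div] at hdiv
      refine hdiv.congr fun v => ?_
      rw [neg_mul]
      field_simp
    have h4 : Tendsto (fun v : ℝ => Real.exp (-t * v)) atTop (nhds 0) := by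
      have h2' := Real.tendsto_exp_neg_atTop_nhds_zero.comp h1
      simpa [Function.comp_def, neg_mul] using h2'
    have := ((h3.div_const t).add (h4.const_mul (1 / t ^ 2))).neg
    simp only [zero_div, mul_zero, zero_add, add_zero, neg_zero] at this
    refine this.congr' ?_
    filter_upwards with v
    ring
  have := integral_Ioi_of_hasDerivAt_of_tendsto' hd hint htop
  rw [this]
  simp [Real.exp_zero]

lemma integral_kernel_eq_one {t : ℝ} (ht : 0 < t) :
    ∫ v : ℝ, t * Real.exp (-t * |v|) / 2 = 1 := by
  rw [show (fun v : ℝ => t * Real.exp (-t * |v|) / 2)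
      = fun v : ℝ => (fun r : ℝ => t * Real.exp (-t * r) / 2) |v| from rfl]
  rw [integral_comp_abs (f := fun r : ℝ => t * Real.exp (-t * r) / 2)]
  have : ∀ r : ℝ, t * Real.exp (-t * r) / 2 = (t / 2) * Real.exp (-t * r) := fun r => by ring
  simp_rw [this]
  rw [integral_const_mul, integral_exp_neg_mul_Ioi ht]
  field_simp

lemma integral_abs_kernel {t : ℝ} (ht : 0 < t) :
    ∫ v : ℝ, |v| * (t * Real.exp (-t * |v|) / 2) = 1 / t := by
  rw [show (fun v : ℝ => |v| * (t * Real.exp (-t * |v|) / 2))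
      = fun v : ℝ => (fun r : ℝ => r * (t * Real.exp (-t * r) / 2)) |v| from rfl]
  rw [integral_comp_abs (f := fun r : ℝ => r * (t * Real.exp (-t * r) / 2))]
  have hr : ∀ r : ℝ, r * (t * Real.exp (-t * r) / 2)
      = (t / 2) * (r * Real.exp (-t * r)) := fun r => by ring
  simp_rw [hr]
  rw [integral_const_mul, integral_abs_exp_neg_mul_Ioi ht]
  field_simp

/-- The final value: `E_s f → f` pointwise as `s → ∞`. -/
lemma tendsto_expConv {f : ℝ → ℝ} (hc : Continuous f) {M0 : ℝ} (hM0 : ∀ y, |f y| ≤ M0)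
    (huc : UniformContinuous f) (x : ℝ) :
    Tendsto (fun s : ℝ => expConv f s x) atTop (nhds (f x)) := by
  have hM0' : (0:ℝ) ≤ M0 := le_trans (abs_nonneg _) (hM0 0)
  rw [Metric.tendsto_atTop]
  intro ε hε
  obtain ⟨δ, hδ, hδ'⟩ := Metric.uniformContinuous_iff.1 huc (ε / 2) (by linarith)
  set C := 2 * M0 / δ with hCdef
  have hC : 0 ≤ C := by positivity
  refine ⟨max 1 (2 * C / ε + 1), fun s hs => ?_⟩
  have hs1 : (1:ℝ) ≤ s := le_trans (le_max_left _ _) hs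
  have hs0 : 0 < s := by linarith
  have hs2 : 2 * C / ε + 1 ≤ s := le_trans (le_max_right _ _) hs
  have hpt : ∀ v : ℝ, |f (x - v) - f x| ≤ ε / 2 + C * |v| := by
    intro v
    rcases lt_or_ge (|v|) δ with h | h
    · have hd : dist (x - v) x < δ := by
        rw [Real.dist_eq]
        simpa using h
      have := hδ' hd
      rw [Real.dist_eq] at this
      have hCv : 0 ≤ C * |v| := mul_nonneg hC (abs_nonneg v)
      linarith
    · have h1 : |f (x - v) - f x| ≤ 2 * M0 := by
        have := abs_sub (f (x - v)) (f x)
        have := hM0 (x - v); have := hM0 x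
        calc |f (x - v) - f x| ≤ |f (x - v)| + |f x| := abs_sub _ _
          _ ≤ 2 * M0 := by linarith [hM0 (x - v), hM0 x]
      have h2 : 2 * M0 = C * δ := by
        rw [hCdef]; field_simp
      have h3 : C * δ ≤ C * |v| := mul_le_mul_of_nonneg_left h hC
      linarith
  have h1 : Integrable (fun v : ℝ => f (x - v) * (s * Real.exp (-s * |v|) / 2)) :=
    integrable_mul_kernel hc hM0 hs0 x
  have h2 : Integrable (fun v : ℝ => f x * (s * Real.exp (-s * |v|) / 2)) :=
    (integrable_kernel hs0).const_mul (f x)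
  have hxint : ∫ v : ℝ, f x * (s * Real.exp (-s * |v|) / 2) = f x := by
    rw [integral_const_mul, integral_kernel_eq_one hs0, mul_one]
  have hnorm : expConv f s x - f x
      = ∫ v : ℝ, (f (x - v) - f x) * (s * Real.exp (-s * |v|) / 2) := by
    have hsub := integral_sub h1 h2
    rw [hxint] at hsub
    rw [expConv, ← hsub]
    exact integral_congr_ae (Eventually.of_forall fun v => by ring)
  have hKabs : Integrable (fun v : ℝ => |v| * (s * Real.exp (-s * |v|) / 2)) := by
    refine ((integrable_abs_exp_abs hs0).const_mul (s / 2)).congr ?_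
    exact Eventually.of_forall fun v => by ring
  have hRHSint : Integrable (fun v : ℝ => (ε / 2 + C * |v|) * (s * Real.exp (-s * |v|) / 2)) := by
    have := ((integrable_kernel hs0).const_mul (ε / 2)).add (hKabs.const_mul C)
    refine this.congr (Eventually.of_forall fun v => ?_)
    simp only [Pi.add_apply]
    ring
  have hbound : |expConv f s x - f x| ≤ ε / 2 + C / s := by
    rw [hnorm]
    have habs : Integrable (fun v : ℝ => |(f (x - v) - f x) * (s * Real.exp (-s * |v|) / 2)|) :=
      ((h1.sub h2).congr (Eventually.of_forall fun v => by
        simp only [Pi.sub_apply]; ring)).abs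
    have step1 : |∫ v : ℝ, (f (x - v) - f x) * (s * Real.exp (-s * |v|) / 2)|
        ≤ ∫ v : ℝ, |(f (x - v) - f x) * (s * Real.exp (-s * |v|) / 2)| := by
      have := norm_integral_le_integral_norm (μ := volume)
        (f := fun v : ℝ => (f (x - v) - f x) * (s * Real.exp (-s * |v|) / 2))
      simpa only [Real.norm_eq_abs] using this
    have step2 : ∫ v : ℝ, |(f (x - v) - f x) * (s * Real.exp (-s * |v|) / 2)|
        ≤ ∫ v : ℝ, (ε / 2 + C * |v|) * (s * Real.exp (-s * |v|) / 2) := by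
      refine integral_mono habs hRHSint fun v => ?_
      have hK : (0:ℝ) ≤ s * Real.exp (-s * |v|) / 2 := by positivity
      rw [abs_mul, abs_of_nonneg hK]
      exact mul_le_mul_of_nonneg_right (hpt v) hK
    have step3 : ∫ v : ℝ, (ε / 2 + C * |v|) * (s * Real.exp (-s * |v|) / 2) = ε / 2 + C / s := by
      have e : ∀ v : ℝ, (ε / 2 + C * |v|) * (s * Real.exp (-s * |v|) / 2)
          = (ε / 2) * (s * Real.exp (-s * |v|) / 2) + C * (|v| * (s * Real.exp (-s * |v|) / 2)) :=
        fun v => by ring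
      simp_rw [e]
      rw [integral_add ((integrable_kernel hs0).const_mul _) (hKabs.const_mul _),
        integral_const_mul, integral_const_mul, integral_kernel_eq_one hs0,
        integral_abs_kernel hs0]
      ring
    calc |∫ v : ℝ, (f (x - v) - f x) * (s * Real.exp (-s * |v|) / 2)|
        ≤ ∫ v : ℝ, |(f (x - v) - f x) * (s * Real.exp (-s * |v|) / 2)| := step1
      _ ≤ ∫ v : ℝ, (ε / 2 + C * |v|) * (s * Real.exp (-s * |v|) / 2) := step2
      _ = ε / 2 + C / s := step3
  have hfin : C / s < ε / 2 := by
    have h := mul_le_mul_of_nonneg_left hs2 hε.le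
    have h2 : ε * (2 * C / ε + 1) = 2 * C + ε := by field_simp
    rw [h2] at h
    rw [div_lt_iff₀ hs0]
    nlinarith
  rw [Real.dist_eq]
  calc |expConv f s x - f x| ≤ ε / 2 + C / s := hbound
    _ < ε := by linarith

end ECAux

theorem exp_conv_fvp
    (f : ℝ → ℝ)
    (hf_diff : ∀ i < 2, Differentiable ℝ (iteratedDeriv i f))
    (hf_bdd : ∀ i ≤ 2, ∃ M : ℝ, ∀ x : ℝ, |iteratedDeriv i f x| ≤ M)
    (hf_uc : ∀ i ≤ 2, UniformContinuous (iteratedDeriv i f))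
    (hf_int : Integrable f) :
    (∀ t > (0 : ℝ), ∀ x : ℝ,
        deriv (fun s => expConv f s x) t =
          (1 / t ^ 2) * deriv (fun s => iteratedDeriv 2 (fun y => expConv f s y) x) t -
            (2 / t ^ 3) * iteratedDeriv 2 (fun y => expConv f t y) x) ∧
      (∀ x : ℝ, Tendsto (fun s : ℝ => expConv f s x) atTop (nhds (f x))) := by
  have hf0d : Differentiable ℝ f := by
    have := hf_diff 0 (by norm_num)
    rwa [iteratedDeriv_zero] at this
  have hf1d : Differentiable ℝ (deriv f) := by
    have := hf_diff 1 (by norm_num)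
    rwa [iteratedDeriv_one] at this
  set f₁ := deriv f with hf₁
  set f₂ := deriv f₁ with hf₂
  have hd1 : ∀ y, HasDerivAt f (f₁ y) y := fun y => (hf0d y).hasDerivAt
  have hd2 : ∀ y, HasDerivAt f₁ (f₂ y) y := fun y => (hf1d y).hasDerivAt
  have hit2 : iteratedDeriv 2 f = f₂ := by
    rw [show (2:ℕ) = 1 + 1 from rfl, iteratedDeriv_succ, iteratedDeriv_one]
  have hfc : Continuous f := hf0d.continuous
  have hc1 : Continuous f₁ := hf1d.continuous
  have hc2 : Continuous f₂ := by
    have := (hf_uc 2 le_rfl).continuous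
    rwa [hit2] at this
  obtain ⟨M0, hM0'⟩ := hf_bdd 0 (by norm_num)
  have hM0 : ∀ y, |f y| ≤ M0 := fun y => by
    have := hM0' y; rwa [iteratedDeriv_zero] at this
  obtain ⟨M1, hM1'⟩ := hf_bdd 1 (by norm_num)
  have hM1 : ∀ y, |f₁ y| ≤ M1 := fun y => by
    have := hM1' y; rwa [iteratedDeriv_one] at this
  obtain ⟨M2, hM2'⟩ := hf_bdd 2 le_rfl
  have hM2 : ∀ y, |f₂ y| ≤ M2 := fun y => by
    have := hM2' y; rwa [hit2] at this
  constructor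
  · intro t ht x
    have hIter : ∀ s : ℝ, 0 < s →
        iteratedDeriv 2 (fun y => expConv f s y) x = s ^ 2 * (expConv f s x - f x) := by
      intro s hs
      have hDx : deriv (fun y => expConv f s y) = fun y => expConv f₁ s y :=
        funext fun y => (ECAux.hasDerivAt_expConv_x hd1 hc1 hM0 hM1 hs y).deriv
      have hDxx : deriv (fun y => expConv f₁ s y) x = expConv f₂ s x :=
        (ECAux.hasDerivAt_expConv_x hd2 hc2 hM1 hM2 hs x).deriv
      calc iteratedDeriv 2 (fun y => expConv f s y) x
          = deriv (deriv (fun y => expConv f s y)) x := by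
            rw [show (2:ℕ) = 1 + 1 from rfl, iteratedDeriv_succ, iteratedDeriv_one]
        _ = deriv (fun y => expConv f₁ s y) x := by rw [hDx]
        _ = expConv f₂ s x := hDxx
        _ = s ^ 2 * (expConv f s x - f x) :=
            ECAux.expConv_second hd1 hd2 hc2 hM0 hM1 hM2 hs x
    have hu := ECAux.hasDerivAt_expConv_t hfc hM0 ht x
    set D := ∫ v : ℝ, f (x - v) * ((1 - t * |v|) * Real.exp (-t * |v|) / 2) with hD
    have hW : HasDerivAt (fun s : ℝ => s ^ 2 * (expConv f s x - f x))
        (2 * t * (expConv f t x - f x) + t ^ 2 * D) t := by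
      have hp : HasDerivAt (fun s : ℝ => s ^ 2) (2 * t) t := by
        simpa using hasDerivAt_pow 2 t
      have := hp.fun_mul (hu.sub_const (f x))
      convert this using 1
      try ring
    have hEq : deriv (fun s => iteratedDeriv 2 (fun y => expConv f s y) x) t
        = 2 * t * (expConv f t x - f x) + t ^ 2 * D := by
      have hev : (fun s => iteratedDeriv 2 (fun y => expConv f s y) x)
          =ᶠ[nhds t] fun s => s ^ 2 * (expConv f s x - f x) := by
        filter_upwards [eventually_gt_nhds ht] with s hs using hIter s hs
      rw [hev.deriv_eq, hW.deriv]
    rw [hu.deriv, hEq, hIter t ht]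
    have ht' : t ≠ 0 := ht.ne'
    field_simp
    ring
  · intro x
    have huc : UniformContinuous f := by
      have := hf_uc 0 (by norm_num)
      rwa [iteratedDeriv_zero] at this
    exact ECAux.tendsto_expConv hfc hM0 huc x
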